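/- Suppose 0 ≤ d < p. Every phase polynomial f : 𝔽_p^n → ℂ of degree at most d has the form f(x) = e^{2πiθ}·e_p(P(x)) for some real θ and some polynomial P : 𝔽_p^n → 𝔽_p of degree at most d, where e_p(m) = e^{2πim/p}. -/

import Mathlib

open Complex

/-- Multiplicative derivative in direction `y`: `(Δ̃_y f)(x) = f(x+y)·conj(f(x))`. -/
def mderiv {G : Type} [AddCommGroup G] (y : G) (f : G → ℂ) : G → ℂ :=
  fun x => f (x + y) * (starRingEnd ℂ) (f x)

/-- Iterated multiplicative derivatives along a list of directions. -/
def mderivs {G : Type} [AddCommGroup G] : List G → (G → ℂ) → (G → ℂ)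
  | [], f => f
  | y :: ys, f => mderivs ys (mderiv y f)

/-- `f` is a phase polynomial of degree at most `d` if all `(d+1)`-fold multiplicative
derivatives of `f` are identically `1`. -/
def IsPhasePoly {G : Type} [AddCommGroup G] (d : ℕ) (f : G → ℂ) : Prop :=
  ∀ ys : List G, ys.length = d + 1 → mderivs ys f = fun _ => 1

/-- Additive derivative in direction `y`: `(Δ_y P)(x) = P(x+y) − P(x)`. -/
def aderiv {G : Type} [AddCommGroup G] {R : Type} [AddCommGroup R]
    (y : G) (P : G → R) : G → R :=
  fun x => P (x + y) - P x

/-- Iterated additive derivatives along a list of directions. -/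
def aderivs {G : Type} [AddCommGroup G] {R : Type} [AddCommGroup R] :
    List G → (G → R) → (G → R)
  | [], P => P
  | y :: ys, P => aderivs ys (aderiv y P)

/-- `P : G → R` is a (classical) polynomial of degree at most `d` if all of its
`(d+1)`-fold additive finite differences vanish identically. -/
def IsPolyDegLE {G : Type} [AddCommGroup G] {R : Type} [AddCommGroup R]
    (d : ℕ) (P : G → R) : Prop :=
  ∀ ys : List G, ys.length = d + 1 → aderivs ys P = fun _ => 0

/-- `e_p(m) = e^{2πim/p}` for `m ∈ 𝔽_p`. -/
noncomputable def ep (p : ℕ) (m : ZMod p) : ℂ :=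
  Complex.exp (2 * Real.pi * Complex.I * (m.val : ℂ) / p)

section E

noncomputable def Efun : AddCircle (1:ℝ) → ℂ :=
  Function.Periodic.lift (f := fun r : ℝ => Complex.exp (2 * Real.pi * Complex.I * r)) (c := 1)
    (by
      intro x
      show Complex.exp (2 * Real.pi * Complex.I * ((x + 1 : ℝ) : ℂ)) = _
      push_cast
      rw [mul_add, Complex.exp_add, mul_one, Complex.exp_two_pi_mul_I, mul_one])

lemma Efun_coe (r : ℝ) : Efun (r : AddCircle (1:ℝ)) = Complex.exp (2 * Real.pi * Complex.I * r) :=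
  Function.Periodic.lift_coe _ r

lemma Efun_add (a b : AddCircle (1:ℝ)) : Efun (a + b) = Efun a * Efun b := by
  induction a using QuotientAddGroup.induction_on with | H r =>
  induction b using QuotientAddGroup.induction_on with | H s =>
  rw [← AddCircle.coe_add, Efun_coe, Efun_coe, Efun_coe, ← Complex.exp_add]
  push_cast
  ring_nf

lemma Efun_zero : Efun (0 : AddCircle (1:ℝ)) = 1 := by
  have : ((0:ℝ) : AddCircle (1:ℝ)) = 0 := by norm_cast
  rw [← this, Efun_coe]
  simp

lemma Efun_neg (a : AddCircle (1:ℝ)) : Efun (-a) = (starRingEnd ℂ) (Efun a) := by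
  induction a using QuotientAddGroup.induction_on with | H r =>
  rw [← AddCircle.coe_neg, Efun_coe, Efun_coe, ← Complex.exp_conj]
  congr 1
  simp only [map_mul, Complex.conj_I, Complex.conj_ofReal, map_ofNat]
  push_cast
  ring

lemma Efun_injective : Function.Injective Efun := by
  intro a b h
  induction a using QuotientAddGroup.induction_on with | H r =>
  induction b using QuotientAddGroup.induction_on with | H s =>
  rw [Efun_coe, Efun_coe, Complex.exp_eq_exp_iff_exists_int] at h
  obtain ⟨m, hm⟩ := h
  have h2 : ((2 * Real.pi * Complex.I)) ≠ 0 := by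
    simp [Real.pi_ne_zero, Complex.I_ne_zero, Complex.ofReal_ne_zero]
  have hr : (r : ℂ) = s + m := by
    have hm' : 2 * (Real.pi:ℂ) * Complex.I * r = 2 * (Real.pi:ℂ) * Complex.I * (s + m) := by
      rw [hm]; ring
    exact mul_left_cancel₀ h2 hm'
  have hrr : r = s + m := by exact_mod_cast hr
  rw [hrr]
  push_cast
  rw [AddCircle.coe_add]
  have : ((m : ℝ) : AddCircle (1:ℝ)) = 0 := by
    rw [AddCircle.coe_eq_zero_iff]
    exact ⟨m, by simp⟩
  rw [this, add_zero]

section EndAlg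

variable {G M : Type} [AddCommGroup G] [AddCommGroup M]

def shiftEnd (y : G) : AddMonoid.End (G → M) :=
  AddMonoidHom.mk' (fun g x => g (x + y)) (fun _ _ => rfl)

def aderivEnd (y : G) : AddMonoid.End (G → M) := shiftEnd y - 1

lemma aderivEnd_apply (y : G) (g : G → M) : aderivEnd y g = aderiv y g := rfl

lemma shiftEnd_zero : (shiftEnd (0:G) : AddMonoid.End (G → M)) = 1 :=
  AddMonoidHom.ext fun g => funext fun x => by show g (x + 0) = g x; rw [add_zero]

lemma shiftEnd_mul (y z : G) :
    (shiftEnd y : AddMonoid.End (G → M)) * shiftEnd z = shiftEnd (y + z) := by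
  refine AddMonoidHom.ext fun g => funext fun x => ?_
  show g (x + y + z) = g (x + (y + z)); rw [add_assoc]

lemma shiftEnd_pow (y : G) (k : ℕ) :
    (shiftEnd y : AddMonoid.End (G → M)) ^ k = shiftEnd (k • y) := by
  induction k with
  | zero => simpa using shiftEnd_zero.symm
  | succ k ih => rw [pow_succ, ih, shiftEnd_mul, succ_nsmul, add_comm (k • y)]

lemma one_add_aderivEnd (y : G) :
    (1 : AddMonoid.End (G → M)) + aderivEnd y = shiftEnd y := by
  rw [aderivEnd]; abel

lemma aderivs_replicate (y : G) (φ : G → M) (m : ℕ) :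
    aderivs (List.replicate m y) φ = ((aderivEnd y : AddMonoid.End (G → M)) ^ m) φ := by
  induction m generalizing φ with
  | zero => rfl
  | succ m ih =>
    show aderivs (y :: List.replicate m y) φ = _
    show aderivs (List.replicate m y) (aderiv y φ) = _
    rw [← aderivEnd_apply, ih, pow_succ]
    rfl

end EndAlg

section Key

lemma torsion_key {p d : ℕ} (hp : p.Prime) (hd : d < p) {G M : Type}
    [AddCommGroup G] [AddCommGroup M]
    (hG : ∀ y : G, p • y = 0) (φ : G → M)
    (hφ : ∀ ys : List G, ys.length = d + 1 → aderivs ys φ = fun _ => 0) :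
    ∀ y : G, p • (aderiv y φ) = 0 := by
  intro y
  set D : AddMonoid.End (G → M) := aderivEnd y with hD
  have hhigh : ∀ m, d + 1 ≤ m → (D ^ m) φ = 0 := by
    intro m hm
    have h1 : D ^ m = D ^ (m - (d+1)) * D ^ (d+1) := by
      rw [← pow_add, Nat.sub_add_cancel hm]
    have h2 : (D ^ (d+1)) φ = 0 := by
      rw [← aderivs_replicate]
      have := hφ (List.replicate (d+1) y) List.length_replicate
      rw [this]; rfl
    calc (D ^ m) φ = (D ^ (m - (d+1))) ((D ^ (d+1)) φ) := by rw [h1]; rfl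
    _ = 0 := by rw [h2, map_zero]
  have hSpow : ((1 : AddMonoid.End (G → M)) + D) ^ p = 1 := by
    rw [one_add_aderivEnd, shiftEnd_pow, hG y, shiftEnd_zero]
  have hexp : (1 : AddMonoid.End (G → M)) =
      ∑ k ∈ Finset.range (p+1), D ^ k * (p.choose k : AddMonoid.End (G → M)) := by
    calc (1 : AddMonoid.End (G → M)) = (D + 1) ^ p := by rw [add_comm, hSpow]
    _ = ∑ k ∈ Finset.range (p+1), D ^ k * 1 ^ (p - k) * (p.choose k : AddMonoid.End (G → M)) :=
        (Commute.one_right D).add_pow p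
    _ = _ := by simp [one_pow, mul_one]
  have happ : φ = ∑ k ∈ Finset.range (p+1), p.choose k • (D ^ k) φ := by
    conv_lhs => rw [show φ = (1 : AddMonoid.End (G → M)) φ from rfl, hexp]
    erw [AddMonoidHom.finset_sum_apply]
    refine Finset.sum_congr rfl fun k _ => ?_
    show (D ^ k) ((p.choose k : AddMonoid.End (G → M)) φ) = _
    rw [AddMonoid.End.natCast_apply, map_nsmul]
  have hsum0 : ∑ i ∈ Finset.range p, p.choose (i+1) • (D ^ (i+1)) φ = 0 := by
    have h := happ
    rw [Finset.sum_range_succ'] at h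
    simp only [Nat.choose_zero_right, one_smul, pow_zero] at h
    have h1 : (1 : AddMonoid.End (G → M)) φ = φ := rfl
    rw [h1] at h
    exact (right_eq_add.mp h)
  have main : ∀ m k, 1 ≤ k → d + 1 ≤ k + m → p • (D ^ k) φ = 0 := by
    intro m
    induction m with
    | zero =>
      intro k hk1 hk2
      rw [hhigh k (by omega)]; simp
    | succ m ih =>
      intro k hk1 hkd
      by_cases hk : d + 1 ≤ k
      · rw [hhigh k hk]; simp
      · have h2 : ∑ i ∈ Finset.range p, p.choose (i+1) • (D ^ (i+k)) φ = 0 := by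
          have h3 : (D ^ (k-1)) (∑ i ∈ Finset.range p, p.choose (i+1) • (D ^ (i+1)) φ) = 0 := by
            rw [hsum0, map_zero]
          rw [map_sum] at h3
          rw [← h3]
          refine Finset.sum_congr rfl fun i _ => ?_
          rw [map_nsmul]
          congr 1
          show (D ^ (i+k)) φ = (D ^ (k-1)) ((D ^ (i+1)) φ)
          rw [show (D ^ (k-1)) ((D ^ (i+1)) φ) = ((D ^ (k-1)) * (D ^ (i+1))) φ from rfl, ← pow_add]
          congr 2
          omega
        rw [show Finset.range p = Finset.range ((p-1)+1) from by
              congr 1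
              omega,
            Finset.sum_range_succ'] at h2
        simp only [zero_add, Nat.choose_one_right] at h2
        have hzero : ∑ i ∈ Finset.range (p-1), p.choose (i+1+1) • (D ^ (i+1+k)) φ = 0 := by
          refine Finset.sum_eq_zero fun i hi => ?_
          by_cases he : d + 1 ≤ i + 1 + k
          · rw [hhigh _ he, smul_zero]
          · have hlt : i + 2 < p := by omega
            obtain ⟨c, hc⟩ := hp.dvd_choose_self (by omega : i + 2 ≠ 0) hlt
            rw [show i+1+1 = i+2 from rfl, hc, mul_comm, mul_smul]
            rw [ih (i+1+k) (by omega) (by omega), smul_zero]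
        rw [hzero, zero_add] at h2
        exact h2
  have hmain := main d 1 le_rfl (by omega)
  rw [pow_one, aderivEnd_apply] at hmain
  exact hmain

end Key

section Assembly

variable {G : Type} [AddCommGroup G]

lemma mderivs_replicate_zero (k : ℕ) (g : G → ℂ) (x : G) :
    mderivs (List.replicate (k+1) (0:G)) g x = ((‖g x‖ : ℂ)) ^ (2 ^ (k+1)) := by
  induction k generalizing g with
  | zero =>
    show mderiv 0 g x = _
    rw [mderiv]
    simp only [add_zero, Complex.mul_conj]
    rw [← Complex.sq_norm]
    push_cast
    norm_num
  | succ k ih =>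
    show mderivs (List.replicate (k+1) (0:G)) (mderiv 0 g) x = _
    rw [ih (mderiv 0 g)]
    have habs : ‖mderiv 0 g x‖ = ‖g x‖ ^ 2 := by
      rw [mderiv]; simp [add_zero, map_mul, Complex.norm_conj, sq]
    rw [habs]
    push_cast
    rw [← pow_mul]
    congr 1
    ring

lemma abs_eq_one_of_phasePoly {d : ℕ} (f : G → ℂ) (hf : IsPhasePoly d f) (x : G) :
    ‖f x‖ = 1 := by
  have h := hf (List.replicate (d+1) (0:G)) List.length_replicate
  have h2 := congrFun h x
  rw [mderivs_replicate_zero d f x] at h2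
  have h3 : (‖f x‖) ^ (2 ^ (d+1)) = 1 := by exact_mod_cast h2
  rcases (pow_eq_one_iff_of_ne_zero (by positivity : (2:ℕ)^(d+1) ≠ 0)).mp h3 with h4 | ⟨h4, _⟩
  · exact h4
  · exfalso
    have := norm_nonneg (f x)
    rw [h4] at this
    linarith

lemma mderivs_eq_Efun (ys : List G) : ∀ (ψ : G → AddCircle (1:ℝ)) (g : G → ℂ),
    (∀ x, g x = Efun (ψ x)) → ∀ x, mderivs ys g x = Efun (aderivs ys ψ x) := by
  induction ys with
  | nil => intro ψ g h x; exact h x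
  | cons y ys ih =>
    intro ψ g h x
    exact ih (aderiv y ψ) (mderiv y g) (fun z => by
      rw [mderiv, h, h, aderiv, sub_eq_add_neg, Efun_add, Efun_neg]) x

lemma hom_aderivs {A B : Type} [AddCommGroup A] [AddCommGroup B] (j : A →+ B) (ys : List G) :
    ∀ (g : G → A) (x : G), j (aderivs ys g x) = aderivs ys (fun t => j (g t)) x := by
  induction ys with
  | nil => intro g x; rfl
  | cons y ys ih =>
    intro g x
    show j (aderivs ys (aderiv y g) x) = aderivs ys (aderiv y (fun t => j (g t))) x
    rw [ih (aderiv y g) x]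
    congr 1
    funext t
    show j (g (t + y) - g t) = j (g (t + y)) - j (g t)
    rw [map_sub]

lemma aderiv_sub_const {A : Type} [AddCommGroup A] (y : G) (φ : G → A) (c : A) :
    aderiv y (fun t => φ t - c) = aderiv y φ := by
  funext x
  show (φ (x + y) - c) - (φ x - c) = φ (x + y) - φ x
  abel

end Assembly

section Iota

variable (p : ℕ) [Fact p.Prime]

noncomputable def iota : ZMod p →+ AddCircle (1:ℝ) :=
  ZMod.lift p ⟨(zmultiplesHom (AddCircle (1:ℝ))) ((((p:ℝ)⁻¹ : ℝ) : AddCircle (1:ℝ))), by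
    have hp0 : (p:ℝ) ≠ 0 := Nat.cast_ne_zero.mpr (Fact.out : p.Prime).ne_zero
    show (p : ℤ) • ((((p:ℝ)⁻¹ : ℝ) : AddCircle (1:ℝ))) = 0
    rw [← AddCircle.coe_zsmul]
    have : (p : ℤ) • ((p:ℝ)⁻¹ : ℝ) = (1:ℝ) := by
      rw [zsmul_eq_mul]
      push_cast
      field_simp
    rw [this]
    exact AddCircle.coe_period (p := (1:ℝ))⟩

lemma iota_int (z : ℤ) : iota p (z : ZMod p) = (((z : ℝ) / p : ℝ) : AddCircle (1:ℝ)) := by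
  rw [iota, ZMod.lift_coe]
  show z • ((((p:ℝ)⁻¹ : ℝ) : AddCircle (1:ℝ))) = _
  rw [← AddCircle.coe_zsmul]
  congr 1
  rw [zsmul_eq_mul, div_eq_mul_inv]

lemma iota_val (m : ZMod p) : iota p m = ((((m.val : ℝ)) / p : ℝ) : AddCircle (1:ℝ)) := by
  have h1 : ((m.val : ℤ) : ZMod p) = m := by
    push_cast
    exact ZMod.natCast_rightInverse m
  rw [← h1, iota_int]
  norm_num

lemma iota_injective : Function.Injective (iota p) := by
  have hplt : (0:ℝ) < p := Nat.cast_pos.mpr (Fact.out : p.Prime).pos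
  refine (injective_iff_map_eq_zero _).mpr fun m hm => ?_
  rw [iota_val, AddCircle.coe_eq_zero_iff] at hm
  obtain ⟨z, hz⟩ := hm
  rw [zsmul_eq_mul, mul_one] at hz
  have hval : ((m.val : ℤ) : ℝ) = ((z * p : ℤ) : ℝ) := by
    push_cast
    rw [hz]
    field_simp
  have hv : (m.val : ℤ) = z * p := Int.cast_injective hval
  have hlt := ZMod.val_lt m
  have hdvd : p ∣ m.val := by
    have : (p:ℤ) ∣ (m.val : ℤ) := ⟨z, by rw [hv]; ring⟩
    exact_mod_cast this
  have : m.val = 0 := Nat.eq_zero_of_dvd_of_lt hdvd hlt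
  rw [← ZMod.natCast_rightInverse m, this]
  simp

lemma torsion_rep (θ : AddCircle (1:ℝ)) (hθ : p • θ = 0) : ∃ m : ZMod p, iota p m = θ := by
  have hp0 : (p:ℝ) ≠ 0 := Nat.cast_ne_zero.mpr (Fact.out : p.Prime).ne_zero
  induction θ using QuotientAddGroup.induction_on with | H r =>
  rw [← AddCircle.coe_nsmul, AddCircle.coe_eq_zero_iff] at hθ
  obtain ⟨z, hz⟩ := hθ
  rw [zsmul_eq_mul, mul_one] at hz
  refine ⟨(z : ZMod p), ?_⟩
  rw [iota_int]
  congr 1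
  rw [nsmul_eq_mul] at hz
  field_simp
  linarith [hz]

lemma Efun_iota (m : ZMod p) : Efun (iota p m) = ep p m := by
  rw [iota_val, Efun_coe, ep]
  congr 1
  push_cast
  ring

end Iota

/-- If `0 ≤ d < p`, every phase polynomial `f : 𝔽_p^n → ℂ` of degree at most `d` has the
form `f(x) = e^{2πiθ}·e_p(P(x))` for some real `θ` and polynomial `P : 𝔽_p^n → 𝔽_p` of
degree at most `d`. -/
theorem phasePoly_structure {p n : ℕ} [Fact p.Prime] (d : ℕ) (hd : d < p)
    (f : (Fin n → ZMod p) → ℂ) (hf : IsPhasePoly d f) :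
    ∃ (θ : ℝ) (P : (Fin n → ZMod p) → ZMod p), IsPolyDegLE d P ∧
      ∀ x, f x = Complex.exp (2 * Real.pi * Complex.I * θ) * ep p (P x) := by
  have hp := (Fact.out : p.Prime)
  have habs := abs_eq_one_of_phasePoly f hf
  let φ : (Fin n → ZMod p) → AddCircle (1:ℝ) :=
    fun x => ((Complex.arg (f x) / (2 * Real.pi) : ℝ) : AddCircle (1:ℝ))
  have hEφ : ∀ x, f x = Efun (φ x) := by
    intro x
    show f x = Efun (((Complex.arg (f x) / (2 * Real.pi) : ℝ) : AddCircle (1:ℝ)))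
    rw [Efun_coe]
    have hπ : (Real.pi:ℂ) ≠ 0 := Complex.ofReal_ne_zero.mpr Real.pi_ne_zero
    have harg : 2 * (Real.pi:ℂ) * Complex.I * ((Complex.arg (f x) / (2 * Real.pi) : ℝ) : ℂ)
        = (Complex.arg (f x) : ℂ) * Complex.I := by
      push_cast
      field_simp
    rw [harg]
    conv_lhs => rw [← Complex.norm_mul_exp_arg_mul_I (f x)]
    rw [habs x]
    simp
  have hφpoly : ∀ ys : List (Fin n → ZMod p), ys.length = d + 1 →
      aderivs ys φ = fun _ => 0 := by
    intro ys hys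
    funext x
    apply Efun_injective
    rw [← mderivs_eq_Efun ys φ f hEφ x, Efun_zero]
    exact congrFun (hf ys hys) x
  have hG : ∀ y : Fin n → ZMod p, p • y = 0 := by
    intro y; funext i
    show p • (y i) = 0
    rw [nsmul_eq_mul, ZMod.natCast_self, zero_mul]
  have htor := torsion_key hp hd hG φ hφpoly
  have htor0 : ∀ x, p • (φ x - φ 0) = 0 := by
    intro x
    have h := congrFun (htor x) 0
    simpa [aderiv, zero_add] using h
  choose P hP using fun x => torsion_rep p (φ x - φ 0) (htor0 x)
  refine ⟨Complex.arg (f 0) / (2 * Real.pi), P, ?_, ?_⟩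
  · intro ys hys
    funext x
    refine iota_injective p ?_
    rw [map_zero, hom_aderivs (iota p) ys P x]
    have hcomp : (fun t => iota p (P t)) = fun t => φ t - φ 0 := funext hP
    rw [hcomp]
    cases ys with
    | nil => simp at hys
    | cons y ys' =>
      show aderivs ys' (aderiv y (fun t => φ t - φ 0)) x = 0
      rw [aderiv_sub_const]
      exact congrFun (hφpoly (y :: ys') hys) x
  · intro x
    have hx : φ x = φ 0 + iota p (P x) := by rw [hP x]; abel
    rw [hEφ x, hx, Efun_add, Efun_iota]
    have h0 : Efun (φ 0) = Complex.exp (2 * Real.pi * Complex.I *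
        ((Complex.arg (f 0) / (2 * Real.pi) : ℝ) : ℂ)) := Efun_coe _
    rw [h0]
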